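/- For every integer n ≥ 1 and every real t with 0 < t < 2(n+1), one has ∫₀^{n+1+t} sⁿ e^{-s} ds ≥ (1 − e^{−t²/(8(n+1))}) · n!. -/

import Mathlib

open MeasureTheory Set Real

private lemma key_intg (n : ℕ) {r : ℝ} (hr : 0 < r) :
    IntegrableOn (fun x : ℝ => x ^ n * Real.exp (-(r * x))) (Set.Ioi 0) := by
  have h := integrableOn_rpow_mul_exp_neg_mul_rpow (p := 1) (s := (n : ℝ))
    (by linarith [(n.cast_nonneg : (0:ℝ) ≤ n)]) one_pos hr
  refine h.congr_fun (fun x hx => ?_) measurableSet_Ioi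
  beta_reduce
  rw [Real.rpow_natCast, Real.rpow_one, neg_mul]

private lemma key_int (n : ℕ) {r : ℝ} (hr : 0 < r) :
    ∫ x in Set.Ioi (0:ℝ), x ^ n * Real.exp (-(r * x))
      = (1/r) ^ ((n : ℝ) + 1) * n.factorial := by
  have h := Real.integral_rpow_mul_exp_neg_mul_Ioi (a := (n : ℝ) + 1) (by positivity) hr
  rw [show ((n : ℝ) + 1) = ((n : ℕ) + 1 : ℝ) by norm_num] at h
  rw [Real.Gamma_nat_eq_factorial] at h
  rw [← h]
  refine setIntegral_congr_fun measurableSet_Ioi (fun x hx => ?_)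
  rw [add_sub_cancel_right, Real.rpow_natCast]

private lemma log_aux {u : ℝ} (hu : 0 < u) (hu2 : u < 2) :
    Real.log (1 + u) ≤ u - u ^ 2 / 8 := by
  rw [Real.log_le_iff_le_exp (by linarith)]
  have h1 : (u - u ^ 2 / 8) / 2 + 1 ≤ Real.exp ((u - u ^ 2 / 8) / 2) :=
    Real.add_one_le_exp _
  have h2 : Real.exp (u - u ^ 2 / 8) = Real.exp ((u - u ^ 2 / 8) / 2) ^ 2 := by
    rw [← Real.exp_nat_mul]; ring_nf
  have h3 : (0:ℝ) ≤ 1 + (u - u ^ 2 / 8) / 2 := by nlinarith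
  nlinarith [sq_nonneg (u - u ^ 2 / 8), sq_nonneg u, sq_nonneg (u * (2 - u))]

theorem stmt_1 (n : ℕ) (hn : 1 ≤ n) (t : ℝ) (ht : 0 < t) (ht2 : t < 2 * (n + 1)) :
    (1 - Real.exp (-(t ^ 2) / (8 * (n + 1)))) * n.factorial ≤
      ∫ s in (0:ℝ)..(n + 1 + t), s ^ n * Real.exp (-s) := by
  set μ : ℝ := (n : ℝ) + 1 with hμ
  have hμpos : 0 < μ := by positivity
  set c : ℝ := μ + t with hc
  have hcpos : 0 < c := by positivity
  set b : ℝ := μ / c with hb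
  have hbpos : 0 < b := by positivity
  -- total integral
  have htot : ∫ x in Set.Ioi (0:ℝ), x ^ n * Real.exp (-x) = (n.factorial : ℝ) := by
    have h := key_int n (r := 1) one_pos
    simpa using h
  have hint1 : IntegrableOn (fun x : ℝ => x ^ n * Real.exp (-x)) (Set.Ioi 0) := by
    have h := key_intg n (r := 1) one_pos
    simpa using h
  -- split
  have hsplit : (∫ x in Set.Ioi (0:ℝ), x ^ n * Real.exp (-x))
      = (∫ x in Set.Ioc (0:ℝ) c, x ^ n * Real.exp (-x))
        + ∫ x in Set.Ioi c, x ^ n * Real.exp (-x) := by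
    rw [← setIntegral_union (Set.Ioc_disjoint_Ioi le_rfl) measurableSet_Ioi
      (hint1.mono_set Set.Ioc_subset_Ioi_self) (hint1.mono_set (Set.Ioi_subset_Ioi hcpos.le)),
      Set.Ioc_union_Ioi_eq_Ioi hcpos.le]
  -- tail bound
  have htail : (∫ x in Set.Ioi c, x ^ n * Real.exp (-x))
      ≤ Real.exp (-(t ^ 2) / (8 * μ)) * n.factorial := by
    have hstep1 : (∫ x in Set.Ioi c, x ^ n * Real.exp (-x))
        ≤ ∫ x in Set.Ioi c, Real.exp (-t) * (x ^ n * Real.exp (-(b * x))) := by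
      refine setIntegral_mono_on (hint1.mono_set (Set.Ioi_subset_Ioi hcpos.le))
        (((key_intg n hbpos).mono_set (Set.Ioi_subset_Ioi hcpos.le)).const_mul _)
        measurableSet_Ioi (fun x hx => ?_)
      have hx' : c ≤ x := (Set.mem_Ioi.mp hx).le
      have hxpos : 0 < x := lt_of_lt_of_le hcpos hx'
      have hbc : b * c = μ := by rw [hb]; field_simp
      have hblt1 : b < 1 := by rw [hb, div_lt_one hcpos]; linarith
      have hbx : b * x + t ≤ x := by
        nlinarith [mul_le_mul_of_nonneg_left hx' (by linarith : (0:ℝ) ≤ 1 - b)]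
      rw [mul_comm (Real.exp (-t)), mul_assoc, ← Real.exp_add]
      refine mul_le_mul_of_nonneg_left (Real.exp_le_exp.mpr (by linarith)) (by positivity)
    have hstep2 : (∫ x in Set.Ioi c, Real.exp (-t) * (x ^ n * Real.exp (-(b * x))))
        ≤ ∫ x in Set.Ioi (0:ℝ), Real.exp (-t) * (x ^ n * Real.exp (-(b * x))) := by
      refine setIntegral_mono_set ((key_intg n hbpos).const_mul _)
        ?_ (HasSubset.Subset.eventuallyLE (Set.Ioi_subset_Ioi hcpos.le))
      filter_upwards [ae_restrict_mem measurableSet_Ioi] with x hx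
      have : 0 < x := hx
      positivity
    have hstep3 : (∫ x in Set.Ioi (0:ℝ), Real.exp (-t) * (x ^ n * Real.exp (-(b * x))))
        = Real.exp (-t) * ((1/b) ^ ((n : ℝ) + 1) * n.factorial) := by
      rw [integral_const_mul, key_int n hbpos]
    have hfinal : Real.exp (-t) * (1/b) ^ ((n : ℝ) + 1) ≤ Real.exp (-(t ^ 2) / (8 * μ)) := by
      have hb1 : (1:ℝ)/b = 1 + t/μ := by rw [hb]; field_simp; exact hc
      have hupos : 0 < t / μ := by positivity
      have hu2 : t / μ < 2 := by rw [div_lt_iff₀ hμpos]; linarith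
      have hlog := log_aux hupos hu2
      have hrpow : (1/b) ^ ((n : ℝ) + 1) = Real.exp (Real.log (1 + t/μ) * ((n:ℝ)+1)) := by
        rw [hb1, Real.rpow_def_of_pos (by linarith)]
      rw [hrpow, ← Real.exp_add, Real.exp_le_exp]
      have hmul : Real.log (1 + t/μ) * μ ≤ (t/μ - (t/μ)^2/8) * μ :=
        mul_le_mul_of_nonneg_right hlog hμpos.le
      have heq : (t/μ - (t/μ)^2/8) * μ = t - t^2/(8*μ) := by field_simp
      rw [heq] at hmul
      have hμeq : ((n:ℝ)+1) = μ := by rw [hμ]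
      rw [hμeq]
      rw [show -(t ^ 2) / (8 * μ) = -(t ^ 2 / (8 * μ)) from neg_div _ _]
      linarith [hmul]
    calc (∫ x in Set.Ioi c, x ^ n * Real.exp (-x))
        ≤ Real.exp (-t) * ((1/b) ^ ((n : ℝ) + 1) * n.factorial) := by
          rw [← hstep3]; exact le_trans hstep1 hstep2
      _ ≤ Real.exp (-(t ^ 2) / (8 * μ)) * n.factorial := by
          rw [← mul_assoc]
          exact mul_le_mul_of_nonneg_right hfinal (Nat.cast_nonneg _)
  -- assemble
  rw [intervalIntegral.integral_of_le (by positivity)]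
  have : (∫ x in Set.Ioc (0:ℝ) c, x ^ n * Real.exp (-x))
      = (n.factorial : ℝ) - ∫ x in Set.Ioi c, x ^ n * Real.exp (-x) := by
    rw [← htot, hsplit]; ring
  rw [this]
  nlinarith [htail]
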